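/- Let R be a Bézout domain of Krull dimension one in which each nonzero ideal is contained in only finitely many maximal ideals. Then every nonzero prime ideal P of R is the radical of a principal ideal: there exists a in P with P = rad(Ra). -/

import Mathlib

open Polynomial

/-- The height of an ideal: the infimum of the heights (in the prime spectrum)
of the prime ideals containing it. -/
noncomputable def idealHeight {A : Type*} [CommRing A] (I : Ideal A) : ℕ∞ :=
  ⨅ (P : PrimeSpectrum A) (_ : I ≤ P.asIdeal), Order.height P

/-- An ideal `I` of a commutative ring is a set theoretic complete intersection if there
exist `n` elements, with `n` the height of `I`, such that the radical of `I` equals the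
radical of the ideal they generate. -/
def IsSTCI {A : Type*} [CommRing A] (I : Ideal A) : Prop :=
  ∃ n : ℕ, (n : ℕ∞) = idealHeight I ∧
    ∃ a : Fin n → A, I.radical = (Ideal.span (Set.range a)).radical

/-- In a domain of Krull dimension ≤ 1, every nonzero prime is maximal. -/
lemma maximal_of_dim_one {R : Type*} [CommRing R] [IsDomain R]
    (hdim : ringKrullDim R = 1) (Q : Ideal R) (hQ : Q.IsPrime) (hQ0 : Q ≠ ⊥) :
    Q.IsMaximal := by
  obtain ⟨M, hM, hQM⟩ := Ideal.exists_le_maximal Q hQ.ne_top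
  rcases eq_or_lt_of_le hQM with rfl | hlt
  · exact hM
  · exfalso
    have hbot : (⊥ : Ideal R).IsPrime := Ideal.bot_prime
    let X0 : PrimeSpectrum R := ⟨⊥, hbot⟩
    let X1 : PrimeSpectrum R := ⟨Q, hQ⟩
    let X2 : PrimeSpectrum R := ⟨M, hM.isPrime⟩
    have h01 : X0 < X1 := by
      refine lt_of_le_of_ne bot_le ?_
      intro h
      exact hQ0 (congrArg PrimeSpectrum.asIdeal h).symm
    have h12 : X1 < X2 := hlt
    let p : LTSeries (PrimeSpectrum R) :=
      ((RelSeries.singleton _ X0).snoc X1 (by simpa using h01)).snoc X2 (by simpa using h12)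
    have hlen : p.length = 2 := rfl
    have := Order.LTSeries.length_le_krullDim p
    rw [hlen] at this
    rw [show Order.krullDim (PrimeSpectrum R) = ringKrullDim R from rfl, hdim] at this
    norm_num at this

/-- In a Bézout domain of Krull dimension one in which each nonzero ideal is contained in
only finitely many maximal ideals, every nonzero prime ideal is the radical of a
principal ideal. -/
theorem stmt_13 (R : Type*) [CommRing R] [IsDomain R] [IsBezout R]
    (hdim : ringKrullDim R = 1)
    (hfin : ∀ I : Ideal R, I ≠ ⊥ → {M : Ideal R | M.IsMaximal ∧ I ≤ M}.Finite)
    (P : Ideal R) (hP : P.IsPrime) (hP0 : P ≠ ⊥) :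
    ∃ a ∈ P, P = (Ideal.span {a}).radical := by
  classical
  obtain ⟨x, hxP, hx0⟩ := Submodule.exists_mem_ne_zero_of_ne_bot hP0
  have hspanx : Ideal.span {x} ≠ ⊥ := by
    simpa [Ideal.span_eq_bot] using hx0
  have hPmax : P.IsMaximal := maximal_of_dim_one hdim P hP hP0
  have hS := hfin (Ideal.span {x}) hspanx
  set s : Finset (Ideal R) := hS.toFinset.erase P with hs
  -- prime avoidance: find y ∈ P avoiding all M ∈ s
  have havoid : ¬ ((P : Set R) ⊆ ⋃ M ∈ (↑s : Set (Ideal R)), (M : Set R)) := by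
    rw [Ideal.subset_union_prime P P (fun i hi _ _ => by
      have := (Finset.mem_erase.mp hi).2
      rw [Set.Finite.mem_toFinset] at this
      exact this.1.isPrime)]
    rintro ⟨M, hMs, hPM⟩
    obtain ⟨hMP, hMmem⟩ := Finset.mem_erase.mp hMs
    rw [Set.Finite.mem_toFinset] at hMmem
    exact hMP ((hPmax.eq_of_le hMmem.1.ne_top hPM).symm)
  obtain ⟨y, hyP, hy⟩ := Set.not_subset.mp havoid
  simp only [Set.mem_iUnion, not_exists] at hy
  -- Bézout: span {x, y} is principal
  have hprin : (Ideal.span {x, y} : Ideal R).IsPrincipal :=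
    IsBezout.isPrincipal_of_FG _ (Submodule.fg_span (Set.toFinite _))
  obtain ⟨a, ha⟩ := hprin
  have ha' : Ideal.span {x, y} = Ideal.span {a} := ha
  have hxa : x ∈ Ideal.span {a} := by
    rw [← ha']; exact Ideal.subset_span (by simp)
  have hya : y ∈ Ideal.span {a} := by
    rw [← ha']; exact Ideal.subset_span (by simp)
  have ha0 : a ≠ 0 := by
    rintro rfl
    rw [Set.singleton_zero, Ideal.span_zero, Submodule.mem_bot] at hxa
    exact hx0 hxa
  have haP : Ideal.span {a} ≤ P := by
    rw [← ha', Ideal.span_le]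
    rintro z (rfl | rfl) <;> simpa using (by assumption)
  refine ⟨a, haP (Ideal.subset_span rfl), le_antisymm ?_ ?_⟩
  · rw [Ideal.radical_eq_sInf]
    refine le_sInf ?_
    rintro J ⟨haJ, hJprime⟩
    have hJ0 : J ≠ ⊥ := by
      intro h
      exact ha0 (by simpa [h, Submodule.mem_bot] using haJ (Ideal.subset_span rfl))
    have hJmax : J.IsMaximal := maximal_of_dim_one hdim J hJprime hJ0
    have hxJ : Ideal.span {x} ≤ J := by
      rw [Ideal.span_le, Set.singleton_subset_iff]
      exact haJ hxa
    have hJmem : J ∈ hS.toFinset := by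
      rw [Set.Finite.mem_toFinset]; exact ⟨hJmax, hxJ⟩
    by_cases hJP : J = P
    · exact hJP ▸ le_rfl
    · exfalso
      have hJs : J ∈ s := Finset.mem_erase.mpr ⟨hJP, hJmem⟩
      exact hy J (Finset.mem_coe.mpr hJs) (haJ hya)
  · calc (Ideal.span {a}).radical ≤ P.radical := Ideal.radical_mono haP
      _ = P := hP.radical
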